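/- Under the canonical form hypotheses, for α > 0 not an eigenvalue of the pencil, the number of eigenvalues λ of K - λK_G with 0 < λ < α and eigenvector orthogonal to Z_c equals ν_-(K - αK_G) - ν_+(Z_N^T K_G Z_N), where ν_± denote the numbers of positive/negative eigenvalues. -/

import Mathlib

open Matrix

section InertiaAux

variable {n : Type*} [Fintype n] [DecidableEq n]

private lemma quadDiag (d x : n → ℝ) :
    x ⬝ᵥ (Matrix.diagonal d *ᵥ x) = ∑ j, d j * x j ^ 2 := by
  simp [dotProduct, Matrix.mulVec_diagonal]
  exact Finset.sum_congr rfl fun j _ => by ring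

private lemma quadConj (A W : Matrix n n ℝ) (y : n → ℝ) :
    (W *ᵥ y) ⬝ᵥ (A *ᵥ (W *ᵥ y)) = y ⬝ᵥ ((Wᵀ * A * W) *ᵥ y) := by
  rw [Matrix.mulVec_mulVec, ← Matrix.vecMul_transpose, Matrix.dotProduct_mulVec,
    Matrix.dotProduct_mulVec, Matrix.vecMul_vecMul, Matrix.mul_assoc]

private lemma span_single_apply {p : n → Prop} [DecidablePred p] {x : n → ℝ}
    (hx : x ∈ Submodule.span ℝ (Set.range fun i : {i // p i} => Pi.single (i : n) (1:ℝ)))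
    {j : n} (hj : ¬ p j) : x j = 0 := by
  rw [Submodule.mem_span_range_iff_exists_fun] at hx
  obtain ⟨c, rfl⟩ := hx
  simp only [Finset.sum_apply, Pi.smul_apply, smul_eq_mul]
  refine Finset.sum_eq_zero fun i _ => ?_
  rw [Pi.single_apply, if_neg (fun h : j = (i : n) => hj (h ▸ i.2)), mul_zero]

private lemma single_li : LinearIndependent ℝ (fun i : n => (Pi.single i (1:ℝ) : n → ℝ)) := by
  have h := (Pi.basisFun ℝ n).linearIndependent
  have : ⇑(Pi.basisFun ℝ n) = fun i : n => (Pi.single i (1:ℝ) : n → ℝ) :=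
    funext fun i => Pi.basisFun_apply ℝ n i
  rwa [this] at h

private lemma mulVec_injective_of_isUnit' {W : Matrix n n ℝ} (hW : IsUnit W) :
    Function.Injective W.mulVec := by
  have hd := (Matrix.isUnit_iff_isUnit_det W).mp hW
  intro x y hxy
  have := congrArg (fun v => W⁻¹ *ᵥ v) hxy
  simpa [Matrix.mulVec_mulVec, Matrix.nonsing_inv_mul _ hd] using this

private lemma isUnit_inv' {W : Matrix n n ℝ} (hW : IsUnit W) : IsUnit W⁻¹ := by
  have hd := (Matrix.isUnit_iff_isUnit_det W).mp hW
  exact ⟨⟨W⁻¹, W, Matrix.nonsing_inv_mul _ hd, Matrix.mul_nonsing_inv _ hd⟩, rfl⟩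

private lemma inertia_le (d e : n → ℝ) (W : Matrix n n ℝ) (hW : Function.Injective W.mulVec)
    (h : Wᵀ * Matrix.diagonal d * W = Matrix.diagonal e) :
    Nat.card {i // e i < 0} ≤ Nat.card {i // d i < 0} := by
  classical
  set b : {i // e i < 0} → (n → ℝ) := fun i => W *ᵥ Pi.single (i : n) 1 with hb
  set U : Submodule ℝ (n → ℝ) := Submodule.span ℝ (Set.range b) with hUdef
  set V : Submodule ℝ (n → ℝ) :=
    Submodule.span ℝ (Set.range fun i : {i // ¬ d i < 0} => Pi.single (i : n) (1:ℝ)) with hVdef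
  have hbli : LinearIndependent ℝ b := by
    have : b = (W.mulVecLin : (n → ℝ) →ₗ[ℝ] (n → ℝ)) ∘
        ((fun i : n => (Pi.single i (1:ℝ) : n → ℝ)) ∘ Subtype.val) := by
      ext i : 1; simp [hb]
    rw [this]
    exact ((single_li.comp Subtype.val Subtype.val_injective).map'
      W.mulVecLin (LinearMap.ker_eq_bot.mpr (by
        have : ⇑W.mulVecLin = W.mulVec := funext fun x => Matrix.mulVecLin_apply W x
        rwa [this])))
  have hUr : Module.finrank ℝ U = Nat.card {i // e i < 0} := by
    rw [Nat.card_eq_fintype_card]; exact finrank_span_eq_card hbli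
  have hVr : Module.finrank ℝ V = Nat.card {i // ¬ d i < 0} := by
    rw [Nat.card_eq_fintype_card]
    exact finrank_span_eq_card (single_li.comp Subtype.val Subtype.val_injective)
  have hdisj : Disjoint U V := by
    rw [Submodule.disjoint_def]
    intro x hxU hxV
    rw [hUdef, Submodule.mem_span_range_iff_exists_fun] at hxU
    obtain ⟨c, hc⟩ := hxU
    set y : n → ℝ := ∑ i : {i // e i < 0}, c i • (Pi.single (i : n) (1:ℝ) : n → ℝ) with hy
    have hymem : y ∈ Submodule.span ℝ
        (Set.range fun i : {i // e i < 0} => Pi.single (i : n) (1:ℝ)) := by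
      rw [Submodule.mem_span_range_iff_exists_fun]; exact ⟨c, rfl⟩
    have hxy : W *ᵥ y = x := by
      have hmap : W *ᵥ y = ∑ i : {i // e i < 0}, c i • (W *ᵥ Pi.single (i : n) (1:ℝ)) := by
        have := map_sum W.mulVecLin
          (fun i : {i // e i < 0} => c i • (Pi.single (i : n) (1:ℝ) : n → ℝ)) Finset.univ
        simpa only [Matrix.mulVecLin_apply, _root_.map_smul, Matrix.mulVec_smul, hy] using this
      rw [hmap, ← hc]
    have hq1 : x ⬝ᵥ (Matrix.diagonal d *ᵥ x) = ∑ j, e j * y j ^ 2 := by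
      rw [← hxy, quadConj, h, quadDiag]
    have hq2 : 0 ≤ x ⬝ᵥ (Matrix.diagonal d *ᵥ x) := by
      rw [quadDiag]
      refine Finset.sum_nonneg fun j _ => ?_
      by_cases hj : d j < 0
      · rw [span_single_apply hxV (by simpa using hj)]; simp
      · exact mul_nonneg (not_lt.mp hj) (sq_nonneg _)
    have hterm : ∀ j ∈ Finset.univ, e j * y j ^ 2 ≤ 0 := by
      intro j _
      by_cases hj : e j < 0
      · nlinarith [sq_nonneg (y j)]
      · rw [span_single_apply hymem hj]; simp
    have hzero : ∀ j ∈ Finset.univ, e j * y j ^ 2 = 0 :=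
      (Finset.sum_eq_zero_iff_of_nonpos hterm).mp
        (le_antisymm (Finset.sum_nonpos hterm) (hq1 ▸ hq2))
    have hy0 : y = 0 := by
      funext j
      by_cases hj : e j < 0
      · have h0 := hzero j (Finset.mem_univ j)
        have : y j ^ 2 = 0 := by
          rcases mul_eq_zero.mp h0 with h' | h'
          · exact absurd h' (ne_of_lt hj)
          · exact h'
        simpa [pow_eq_zero_iff] using this
      · exact span_single_apply hymem hj
    rw [← hxy, hy0]; simp
  have hsum := Submodule.finrank_sup_add_finrank_inf_eq U V
  rw [disjoint_iff.mp hdisj, finrank_bot] at hsum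
  have hle : Module.finrank ℝ (U ⊔ V : Submodule ℝ (n → ℝ)) ≤ Fintype.card n := by
    have := Submodule.finrank_le (U ⊔ V : Submodule ℝ (n → ℝ))
    rwa [Module.finrank_fintype_fun_eq_card] at this
  have hcompl : Nat.card {i // ¬ d i < 0} = Fintype.card n - Nat.card {i // d i < 0} := by
    rw [Nat.card_eq_fintype_card, Nat.card_eq_fintype_card, Fintype.card_subtype_compl]
  have hdle : Nat.card {i // d i < 0} ≤ Fintype.card n := by
    rw [Nat.card_eq_fintype_card]; exact Fintype.card_subtype_le _
  omega

private lemma congr_inv' {A B W : Matrix n n ℝ} (hW : IsUnit W) (h : Wᵀ * A * W = B) :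
    (W⁻¹)ᵀ * B * W⁻¹ = A := by
  have hd := (Matrix.isUnit_iff_isUnit_det W).mp hW
  have h1 : W * W⁻¹ = 1 := Matrix.mul_nonsing_inv _ hd
  rw [← h]
  calc (W⁻¹)ᵀ * (Wᵀ * A * W) * W⁻¹ = (W * W⁻¹)ᵀ * A * (W * W⁻¹) := by
        rw [Matrix.transpose_mul]; noncomm_ring
    _ = A := by rw [h1]; simp

private lemma inertia_eq (d e : n → ℝ) (W : Matrix n n ℝ) (hW : IsUnit W)
    (h : Wᵀ * Matrix.diagonal d * W = Matrix.diagonal e) :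
    Nat.card {i // d i < 0} = Nat.card {i // e i < 0} := by
  refine le_antisymm ?_ (inertia_le d e W (mulVec_injective_of_isUnit' hW) h)
  exact inertia_le e d W⁻¹ (mulVec_injective_of_isUnit' (isUnit_inv' hW)) (congr_inv' hW h)

/-- Two diagonal congruence presentations of the same symmetric matrix have the
same number of negative diagonal entries. -/
private lemma congr_count {A : Matrix n n ℝ} {W V : Matrix n n ℝ} {d e : n → ℝ}
    (hW : IsUnit W) (hV : IsUnit V)
    (h1 : Wᵀ * A * W = Matrix.diagonal d) (h2 : Vᵀ * A * V = Matrix.diagonal e) :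
    Nat.card {i // d i < 0} = Nat.card {i // e i < 0} := by
  have hA := congr_inv' hW h1
  have hWV : IsUnit (W⁻¹ * V) := (isUnit_inv' hW).mul hV
  refine inertia_eq d e (W⁻¹ * V) hWV ?_
  rw [Matrix.transpose_mul, ← h2, ← hA]
  noncomm_ring

private lemma spectral_congr {A : Matrix n n ℝ} (hA : A.IsHermitian) :
    IsUnit (hA.eigenvectorUnitary : Matrix n n ℝ) ∧
    (hA.eigenvectorUnitary : Matrix n n ℝ)ᵀ * A * (hA.eigenvectorUnitary : Matrix n n ℝ)
      = Matrix.diagonal hA.eigenvalues := by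
  constructor
  · exact ⟨Unitary.toUnits hA.eigenvectorUnitary, rfl⟩
  · have := hA.conjStarAlgAut_star_eigenvectorUnitary
    rw [Unitary.conjStarAlgAut_star_apply] at this
    rw [Matrix.star_eq_conjTranspose, Matrix.conjTranspose_eq_transpose_of_trivial] at this
    simpa [RCLike.ofReal_real_eq_id] using this

/-- Negative eigenvalue count equals negative entry count of any diagonal congruence. -/
private lemma eig_neg_count {A : Matrix n n ℝ} (hA : A.IsHermitian) {W : Matrix n n ℝ}
    (hW : IsUnit W) {d : n → ℝ} (h : Wᵀ * A * W = Matrix.diagonal d) :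
    Nat.card {i // hA.eigenvalues i < 0} = Nat.card {i // d i < 0} := by
  obtain ⟨hUu, hUdiag⟩ := spectral_congr hA
  exact congr_count hUu hW hUdiag h

/-- Positive eigenvalue count equals positive entry count of any diagonal congruence. -/
private lemma eig_pos_count {A : Matrix n n ℝ} (hA : A.IsHermitian) {W : Matrix n n ℝ}
    (hW : IsUnit W) {d : n → ℝ} (h : Wᵀ * A * W = Matrix.diagonal d) :
    Nat.card {i // 0 < hA.eigenvalues i} = Nat.card {i // 0 < d i} := by
  obtain ⟨hUu, hUdiag⟩ := spectral_congr hA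
  have hUdiag' : (hA.eigenvectorUnitary : Matrix n n ℝ)ᵀ * (-A) *
      (hA.eigenvectorUnitary : Matrix n n ℝ) = Matrix.diagonal (-hA.eigenvalues) := by
    rw [Matrix.mul_neg, Matrix.neg_mul, hUdiag, Matrix.diagonal_neg]; rfl
  have h' : Wᵀ * (-A) * W = Matrix.diagonal (-d) := by
    rw [Matrix.mul_neg, Matrix.neg_mul, h, Matrix.diagonal_neg]; rfl
  have key := congr_count hUu hW hUdiag' h'
  have e1 : Nat.card {i // 0 < hA.eigenvalues i}
      = Nat.card {i // (-hA.eigenvalues) i < 0} :=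
    Nat.card_congr (Equiv.subtypeEquivRight fun i => by simp)
  have e2 : Nat.card {i // 0 < d i} = Nat.card {i // (-d) i < 0} :=
    Nat.card_congr (Equiv.subtypeEquivRight fun i => by simp)
  rw [e1, e2, key]

end InertiaAux

set_option maxHeartbeats 1600000 in
/-- as STATEMENT 18 but for α > 0: the number of pencil
eigenvalues of the pencil K - λK_G with eigenvector ⟂ Z_c are the reciprocals of
the nonzero diagonal entries of Λ₁), for α < 0 not an eigenvalue, the number of such
eigenvalues in (0, α) equals ν₋(K - αK_G) - ν₊(Z_Nᵀ K_G Z_N), stated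
additively: n(0,α) + ν₊(Z_Nᵀ K_G Z_N) = ν₋(K - αK_G). -/
theorem stmt19 {n1 n2 n3 : ℕ}
    (K KG : Matrix (Fin n1 ⊕ (Fin n2 ⊕ Fin n3)) (Fin n1 ⊕ (Fin n2 ⊕ Fin n3)) ℝ)
    (hKpsd : K.PosSemidef) (hKG : KGᵀ = KG)
    (W : Matrix (Fin n1 ⊕ (Fin n2 ⊕ Fin n3)) (Fin n1 ⊕ (Fin n2 ⊕ Fin n3)) ℝ)
    (hW : IsUnit W)
    (Λ1 : Fin n1 → ℝ) (Λ2 : Fin n2 → ℝ) (hΛ2 : ∀ i, Λ2 i ≠ 0)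
    (hcanKG : Wᵀ * KG * W
      = Matrix.fromBlocks (Matrix.diagonal Λ1) 0 0
          (Matrix.fromBlocks (Matrix.diagonal Λ2) 0 0 0))
    (hcanK : Wᵀ * K * W
      = Matrix.fromBlocks (1 : Matrix (Fin n1) (Fin n1) ℝ) 0 0 0)
    (ZN : Matrix (Fin n1 ⊕ (Fin n2 ⊕ Fin n3)) (Fin n2) ℝ)
    (R22 : Matrix (Fin n2) (Fin n2) ℝ) (R32 : Matrix (Fin n3) (Fin n2) ℝ)
    (hR22 : IsUnit R22)
    (hZN : ZN = W.submatrix id (Sum.inr ∘ Sum.inl : Fin n2 → _) * R22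
      + W.submatrix id (Sum.inr ∘ Sum.inr : Fin n3 → _) * R32)
    (α : ℝ) (hα : 0 < α) (hreg : ∀ i, 1 - α * Λ1 i ≠ 0) :
    ∀ (h1 : (K - α • KG).IsHermitian) (h2 : (ZNᵀ * KG * ZN).IsHermitian),
      Nat.card {i : Fin n1 // Λ1 i ≠ 0 ∧ 0 < (Λ1 i)⁻¹ ∧ (Λ1 i)⁻¹ < α}
          + Nat.card {i // 0 < h2.eigenvalues i}
        = Nat.card {i // h1.eigenvalues i < 0} := by
  intro h1 h2
  classical
  set D : Fin n1 ⊕ (Fin n2 ⊕ Fin n3) → ℝ :=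
    Sum.elim (fun i => 1 - α * Λ1 i) (Sum.elim (fun i => -(α * Λ2 i)) (fun _ => 0)) with hD
  -- diagonal form of K - α•KG
  have hM : Wᵀ * (K - α • KG) * W = Matrix.diagonal D := by
    have hexp : Wᵀ * (K - α • KG) * W = Wᵀ * K * W - α • (Wᵀ * KG * W) := by
      rw [Matrix.mul_sub, Matrix.sub_mul]
      congr 1
      rw [Matrix.mul_smul, Matrix.smul_mul]
    rw [hexp, hcanK, hcanKG]
    have hblk1 : (1 : Matrix (Fin n1) (Fin n1) ℝ) - α • Matrix.diagonal Λ1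
        = Matrix.diagonal (fun i => 1 - α * Λ1 i) := by
      rw [← Matrix.diagonal_one, ← Matrix.diagonal_smul, ← Matrix.diagonal_sub]
      rfl
    have hblk2 : (0 : Matrix (Fin n2 ⊕ Fin n3) (Fin n2 ⊕ Fin n3) ℝ)
          - α • Matrix.fromBlocks (Matrix.diagonal Λ2) 0 0 0
        = Matrix.diagonal (Sum.elim (fun i => -(α * Λ2 i)) (fun _ => (0:ℝ))) := by
      rw [zero_sub, ← Matrix.fromBlocks_diagonal]
      rw [Matrix.fromBlocks_smul, Matrix.fromBlocks_neg]
      congr 1 <;> try simp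
      rw [← Matrix.diagonal_smul, ← Matrix.diagonal_neg]
      rfl
    rw [hD, ← Matrix.fromBlocks_diagonal, ← hblk1, ← hblk2]
    rw [Matrix.fromBlocks_smul]
    ext (i | i) (j | j) <;>
      simp [Matrix.sub_apply, Matrix.fromBlocks]
  -- diagonal form of ZNᵀ KG ZN
  set E : Matrix (Fin n1 ⊕ (Fin n2 ⊕ Fin n3)) (Fin n2) ℝ :=
    Matrix.fromRows 0 (Matrix.fromRows R22 R32) with hE
  have hWE : W * E = W.submatrix id (Sum.inr ∘ Sum.inl : Fin n2 → _) * R22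
      + W.submatrix id (Sum.inr ∘ Sum.inr : Fin n3 → _) * R32 := by
    conv_lhs => rw [← Matrix.fromCols_toCols W]
    rw [hE, Matrix.fromCols_mul_fromRows, Matrix.mul_zero, zero_add]
    conv_lhs => rw [← Matrix.fromCols_toCols W.toCols₂]
    rw [Matrix.fromCols_mul_fromRows]
    rfl
  have hZNE : ZN = W * E := by rw [hZN, hWE]
  have hP : ZNᵀ * KG * ZN = R22ᵀ * Matrix.diagonal Λ2 * R22 := by
    rw [hZNE]
    have hconj : (W * E)ᵀ * KG * (W * E) = Eᵀ * (Wᵀ * KG * W) * E := by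
      rw [Matrix.transpose_mul]; simp only [Matrix.mul_assoc]
    rw [hconj, hcanKG, hE]
    simp [Matrix.transpose_fromRows, Matrix.fromBlocks_mul_fromRows,
      Matrix.fromCols_mul_fromRows, Matrix.mul_assoc]
  -- congruence for ZNᵀ KG ZN with R22⁻¹
  have hPdiag : (R22⁻¹)ᵀ * (ZNᵀ * KG * ZN) * R22⁻¹ = Matrix.diagonal Λ2 :=
    congr_inv' hR22 hP.symm
  -- eigenvalue counts
  have hcount1 : Nat.card {i // h1.eigenvalues i < 0} = Nat.card {i // D i < 0} :=
    eig_neg_count h1 hW hM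
  have hcount2 : Nat.card {i // 0 < h2.eigenvalues i} = Nat.card {i // 0 < Λ2 i} :=
    eig_pos_count h2 (isUnit_inv' hR22) hPdiag
  -- split the count over the sum type
  have hsplit : Nat.card {i // D i < 0}
      = Nat.card {i : Fin n1 // 1 - α * Λ1 i < 0} + Nat.card {i : Fin n2 // 0 < Λ2 i} := by
    have e0 : Nat.card {i // D i < 0}
        = Nat.card {i : Fin n1 // D (Sum.inl i) < 0}
          + (Nat.card {i : Fin n2 // D (Sum.inr (Sum.inl i)) < 0}
             + Nat.card {i : Fin n3 // D (Sum.inr (Sum.inr i)) < 0}) := by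
      rw [Nat.card_congr (Equiv.subtypeSum (p := fun i => D i < 0)), Nat.card_sum,
        Nat.card_congr (Equiv.subtypeSum (p := fun i : Fin n2 ⊕ Fin n3 => D (Sum.inr i) < 0)),
        Nat.card_sum]
    rw [e0]
    have hz : Nat.card {i : Fin n3 // D (Sum.inr (Sum.inr i)) < 0} = 0 := by
      have : IsEmpty {i : Fin n3 // D (Sum.inr (Sum.inr i)) < 0} :=
        ⟨fun x => by have hx := x.2; simp [hD] at hx⟩
      exact Nat.card_of_isEmpty
    have h1' : Nat.card {i : Fin n1 // D (Sum.inl i) < 0}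
        = Nat.card {i : Fin n1 // 1 - α * Λ1 i < 0} :=
      Nat.card_congr (Equiv.subtypeEquivRight fun i => by simp [hD])
    have h2' : Nat.card {i : Fin n2 // D (Sum.inr (Sum.inl i)) < 0}
        = Nat.card {i : Fin n2 // 0 < Λ2 i} := by
      refine Nat.card_congr (Equiv.subtypeEquivRight fun i => ?_)
      simp only [hD, Sum.elim_inr, Sum.elim_inl, neg_lt_zero]
      constructor <;> intro h <;> nlinarith
    rw [hz, h1', h2', add_zero]
  -- identify the first count
  have hfirst : Nat.card {i : Fin n1 // Λ1 i ≠ 0 ∧ 0 < (Λ1 i)⁻¹ ∧ (Λ1 i)⁻¹ < α}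
      = Nat.card {i : Fin n1 // 1 - α * Λ1 i < 0} := by
    refine Nat.card_congr (Equiv.subtypeEquivRight fun i => ?_)
    constructor
    · rintro ⟨hne, hpos, hlt⟩
      have hΛpos : 0 < Λ1 i := inv_pos.mp hpos
      have : 1 < α * Λ1 i := by
        rw [← one_div] at hlt
        have := (div_lt_iff₀ hΛpos).mp hlt
        linarith [mul_comm (Λ1 i) α]
      linarith
    · intro h
      have hΛpos : 0 < Λ1 i := by nlinarith
      refine ⟨ne_of_gt hΛpos, inv_pos.mpr hΛpos, ?_⟩
      rw [← one_div]
      rw [div_lt_iff₀ hΛpos]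
      nlinarith
  rw [hcount1, hcount2, hsplit, hfirst]
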